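/- Two graph homomorphisms f, g : G → H are ×-homotopic (belong to the same connected component of the poset Hom(G,H)) if and only if there exist n ≥ 0 and a graph homomorphism F : G × I_n → H with F(x, 0) = f(x) and F(x, n) = g(x) for all vertices x of G. -/

import Mathlib

/-- A graph: a symmetric relation on a vertex type (loops allowed). -/
structure SymGraph (V : Type*) where
  adj : V → V → Prop
  symm : ∀ {x y : V}, adj x y → adj y x

variable {V W U : Type*}

/-- `f` is a graph homomorphism from `G` to `H`. -/
def IsGraphHom (G : SymGraph V) (H : SymGraph W) (f : V → W) : Prop :=
  ∀ {x y : V}, G.adj x y → H.adj (f x) (f y)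

/-- The type of graph homomorphisms. -/
def GHom (G : SymGraph V) (H : SymGraph W) := {f : V → W // IsGraphHom G H f}

def GHom.id (G : SymGraph V) : GHom G G := ⟨fun x => x, fun h => h⟩

def GHom.comp {G : SymGraph V} {H : SymGraph W} {K : SymGraph U}
    (g : GHom H K) (f : GHom G H) : GHom G K :=
  ⟨fun x => g.1 (f.1 x), fun h => g.2 (f.2 h)⟩

/-- `η` is a multi-homomorphism from `G` to `H`. -/
def IsMultiHom (G : SymGraph V) (H : SymGraph W) (η : V → Set W) : Prop :=
  (∀ x, (η x).Nonempty) ∧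
    ∀ {x y}, G.adj x y → ∀ a ∈ η x, ∀ b ∈ η y, H.adj a b

/-- The Hom complex `Hom(G,H)`: the poset of multi-homomorphisms. -/
def MultiHom (G : SymGraph V) (H : SymGraph W) := {η : V → Set W // IsMultiHom G H η}

instance (G : SymGraph V) (H : SymGraph W) : PartialOrder (MultiHom G H) :=
  Subtype.partialOrder _

/-- A graph homomorphism regarded as a multi-homomorphism (pointwise singletons). -/
def GHom.toMulti {G : SymGraph V} {H : SymGraph W} (f : GHom G H) : MultiHom G H :=
  ⟨fun x => {f.1 x}, fun x => ⟨f.1 x, rfl⟩, by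
    intro x y h a ha b hb
    rw [Set.mem_singleton_iff] at ha hb
    subst ha; subst hb
    exact f.2 h⟩

/-- Two homomorphisms are ×-homotopic iff they lie in the same connected
component of the poset `Hom(G,H)`. -/
def XHomotopic {G : SymGraph V} {H : SymGraph W} (f g : GHom G H) : Prop :=
  Relation.ReflTransGen (fun η η' : MultiHom G H => η ≤ η' ∨ η' ≤ η)
    f.toMulti g.toMulti

/-- The categorical product of graphs. -/
def prodGraph (G : SymGraph V) (H : SymGraph W) : SymGraph (V × W) where
  adj p q := G.adj p.1 q.1 ∧ H.adj p.2 q.2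
  symm h := ⟨G.symm h.1, H.symm h.2⟩

/-- The graph `I_n` on vertices `{0,…,n}`, with `x ~ y` iff `|x - y| ≤ 1`
(in particular every vertex is looped). -/
def In (n : ℕ) : SymGraph (Fin (n + 1)) where
  adj i j := |(i : ℤ) - (j : ℤ)| ≤ 1
  symm {i j} h := (abs_sub_comm (j : ℤ) (i : ℤ)).trans_le h


section AuxStmt9
variable {G : SymGraph V} {H : SymGraph W}

private lemma In_adj {n : ℕ} {i j : Fin (n+1)} (h : |(i:ℤ) - (j:ℤ)| ≤ 1) : (In n).adj i j := h

private lemma slice_multi {n : ℕ} (F : GHom (prodGraph G (In n)) H) (i : Fin (n+1)) :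
    IsMultiHom G H (fun x => {F.1 (x, i)}) := by
  refine ⟨fun x => ⟨F.1 (x, i), rfl⟩, ?_⟩
  intro x y h a ha b hb
  rw [Set.mem_singleton_iff] at ha hb; subst ha; subst hb
  exact F.2 ⟨h, In_adj (by simp)⟩

private lemma pair_multi {n : ℕ} (F : GHom (prodGraph G (In n)) H) (i j : Fin (n+1))
    (hij : |(i:ℤ) - (j:ℤ)| ≤ 1) :
    IsMultiHom G H (fun x => {F.1 (x, i), F.1 (x, j)}) := by
  refine ⟨fun x => ⟨F.1 (x, i), Or.inl rfl⟩, ?_⟩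
  intro x y h a ha b hb
  have ha' : a = F.1 (x, i) ∨ a = F.1 (x, j) := ha
  have hb' : b = F.1 (y, i) ∨ b = F.1 (y, j) := hb
  rcases ha' with rfl | rfl <;> rcases hb' with rfl | rfl
  · exact F.2 ⟨h, In_adj (by simp)⟩
  · exact F.2 ⟨h, In_adj hij⟩
  · exact F.2 ⟨h, In_adj (by rwa [abs_sub_comm])⟩
  · exact F.2 ⟨h, In_adj (by simp)⟩

private lemma back_chain {n : ℕ} (F : GHom (prodGraph G (In n)) H) :
    ∀ i : ℕ, ∀ hi : i ≤ n,
      Relation.ReflTransGen (fun η η' : MultiHom G H => η ≤ η' ∨ η' ≤ η)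
        ⟨_, slice_multi F 0⟩ ⟨_, slice_multi F ⟨i, Nat.lt_succ_of_le hi⟩⟩ := by
  intro i
  induction i with
  | zero =>
    intro _
    have : (⟨0, Nat.lt_succ_of_le (Nat.zero_le n)⟩ : Fin (n+1)) = 0 := by ext; simp
    rw [this]
    exact Relation.ReflTransGen.refl
  | succ k ih =>
    intro hi
    have hk : k ≤ n := Nat.le_of_succ_le hi
    set ik : Fin (n+1) := ⟨k, Nat.lt_succ_of_le hk⟩
    set ik1 : Fin (n+1) := ⟨k+1, Nat.lt_succ_of_le hi⟩
    have habs : |(ik:ℤ) - (ik1:ℤ)| ≤ 1 := by simp [ik, ik1]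
    set μ : MultiHom G H := ⟨_, pair_multi F ik ik1 habs⟩ with hμ
    have h1 : (⟨_, slice_multi F ik⟩ : MultiHom G H) ≤ μ := fun x a ha => Or.inl ha
    have h2 : (⟨_, slice_multi F ik1⟩ : MultiHom G H) ≤ μ := fun x a ha => Or.inr ha
    exact ((ih hk).tail (Or.inl h1)).tail (Or.inr h2)

private lemma fwd (f : GHom G H) (η : MultiHom G H)
    (hchain : Relation.ReflTransGen (fun η η' : MultiHom G H => η ≤ η' ∨ η' ≤ η)
      f.toMulti η) :
    ∃ n : ℕ, ∃ F : GHom (prodGraph G (In n)) H,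
      (∀ x : V, F.1 (x, 0) = f.1 x) ∧ ∀ x : V, F.1 (x, Fin.last n) ∈ η.1 x := by
  induction hchain with
  | refl =>
    refine ⟨0, ⟨fun p => f.1 p.1, fun h => f.2 h.1⟩, fun x => rfl, fun x => rfl⟩
  | tail _ hrel ih =>
    rename_i η η' _
    obtain ⟨n, F, h0, hend⟩ := ih
    choose c hc using η'.2.1
    refine ⟨n + 1, ⟨fun p => if h : p.2.val ≤ n then F.1 (p.1, ⟨p.2.val, Nat.lt_succ_of_le h⟩)
      else c p.1, ?_⟩, ?_, ?_⟩
    · rintro ⟨x, i⟩ ⟨y, j⟩ ⟨hxy, hij⟩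
      have hij' : |(i.val : ℤ) - (j.val : ℤ)| ≤ 1 := hij
      dsimp only
      by_cases hi : i.val ≤ n <;> by_cases hj : j.val ≤ n
      · rw [dif_pos hi, dif_pos hj]
        exact F.2 ⟨hxy, In_adj (by simpa using hij')⟩
      · rw [dif_pos hi, dif_neg hj]
        rw [abs_le] at hij'
        have hjlt := j.isLt
        have hin : i.val = n := by omega
        have hFi : (⟨i.val, Nat.lt_succ_of_le hi⟩ : Fin (n+1)) = Fin.last n := Fin.ext hin
        rw [hFi]
        rcases hrel with hle | hle
        · exact η'.2.2 hxy _ (hle x (hend x)) _ (hc y)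
        · exact η.2.2 hxy _ (hend x) _ (hle y (hc y))
      · rw [dif_neg hi, dif_pos hj]
        rw [abs_le] at hij'
        have hilt := i.isLt
        have hjn : j.val = n := by omega
        have hFj : (⟨j.val, Nat.lt_succ_of_le hj⟩ : Fin (n+1)) = Fin.last n := Fin.ext hjn
        rw [hFj]
        rcases hrel with hle | hle
        · exact η'.2.2 hxy _ (hc x) _ (hle y (hend y))
        · exact η.2.2 hxy _ (hle x (hc x)) _ (hend y)
      · rw [dif_neg hi, dif_neg hj]
        exact η'.2.2 hxy _ (hc x) _ (hc y)
    · intro x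
      have h0' : ((0 : Fin (n+2)) : ℕ) ≤ n := by simp
      dsimp only
      rw [dif_pos h0']
      have : (⟨((0 : Fin (n+2)) : ℕ), Nat.lt_succ_of_le h0'⟩ : Fin (n+1)) = 0 := by
        ext; simp
      rw [this]; exact h0 x
    · intro x
      have hlast : ¬ ((Fin.last (n+1) : Fin (n+2)) : ℕ) ≤ n := by simp
      dsimp only
      rw [dif_neg hlast]
      exact hc x

end AuxStmt9

/-- Two graph homomorphisms `f, g : G → H` are ×-homotopic iff there are
`n ≥ 0` and a graph homomorphism `F : G × I_n → H` with `F(x,0) = f(x)` and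
`F(x,n) = g(x)` for all vertices `x`. -/
theorem stmt_9 {G : SymGraph V} {H : SymGraph W} (f g : GHom G H) :
    XHomotopic f g ↔
      ∃ n : ℕ, ∃ F : GHom (prodGraph G (In n)) H,
        ∀ x : V, F.1 (x, 0) = f.1 x ∧ F.1 (x, Fin.last n) = g.1 x := by
  unfold XHomotopic
  constructor
  · intro h
    obtain ⟨n, F, h0, hend⟩ := fwd f g.toMulti h
    exact ⟨n, F, fun x => ⟨h0 x, hend x⟩⟩
  · rintro ⟨n, F, hF⟩
    have hf : f.toMulti = ⟨_, slice_multi F 0⟩ := by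
      apply Subtype.ext; funext x
      exact congrArg (fun w => ({w} : Set W)) (hF x).1.symm
    have hg : g.toMulti = ⟨_, slice_multi F ⟨n, Nat.lt_succ_of_le le_rfl⟩⟩ := by
      apply Subtype.ext; funext x
      have : (⟨n, Nat.lt_succ_of_le le_rfl⟩ : Fin (n+1)) = Fin.last n := rfl
      rw [this]
      exact congrArg (fun w => ({w} : Set W)) (hF x).2.symm
    rw [hf, hg]
    exact back_chain F n le_rfl
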